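/- On the interval (2, +∞) the functions a, b, c are positive and strictly decreasing: for all real z, w with 2 < z < w one has a(z) > a(w) > 0, b(z) > b(w) > 0 and c(z) > c(w) > 0. -/

import Mathlib

open MeasureTheory Real Filter Topology Asymptotics intervalIntegral

/-- `a(z) = (1/2π)∫_{−π}^{π} dq/(z − 1 + cos q)`. -/
noncomputable def aF (z : ℝ) : ℝ :=
  (2 * Real.pi)⁻¹ * ∫ q in (-Real.pi)..Real.pi, (z - 1 + Real.cos q)⁻¹

/-- `b(z) = −(1/2π)∫_{−π}^{π} cos q dq/(z − 1 + cos q)`. -/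
noncomputable def bF (z : ℝ) : ℝ :=
  -((2 * Real.pi)⁻¹ * ∫ q in (-Real.pi)..Real.pi, Real.cos q / (z - 1 + Real.cos q))

/-- `c(z) = (1/2π)∫_{−π}^{π} cos² q dq/(z − 1 + cos q)`. -/
noncomputable def cF (z : ℝ) : ℝ :=
  (2 * Real.pi)⁻¹ * ∫ q in (-Real.pi)..Real.pi, (Real.cos q) ^ 2 / (z - 1 + Real.cos q)

/-- The Fredholm determinant `Δ(μ,λ;z) = (1 − μ a(z))(1 − λ c(z)) − μλ b(z)²`. -/
noncomputable def Δdet (μ lam z : ℝ) : ℝ :=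
  (1 - μ * aF z) * (1 - lam * cF z) - μ * lam * (bF z) ^ 2

lemma dpos {z : ℝ} (hz : 2 < z) (q : ℝ) : 0 < z - 1 + Real.cos q := by
  nlinarith [Real.neg_one_le_cos q]

lemma contInv {z : ℝ} (hz : 2 < z) : Continuous fun q => (z - 1 + Real.cos q)⁻¹ :=
  (continuous_const.add Real.continuous_cos).inv₀ fun q => (dpos hz q).ne'

lemma contDiv {z : ℝ} (hz : 2 < z) {g : ℝ → ℝ} (hg : Continuous g) :
    Continuous fun q => g q / (z - 1 + Real.cos q) :=
  hg.div (continuous_const.add Real.continuous_cos) fun q => (dpos hz q).ne'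

lemma keyb {z w : ℝ} (hz : 2 < z) (hzw : z < w) (q : ℝ) :
    Real.cos q / (z - 1 + Real.cos q) ≤
      Real.cos q / (w - 1 + Real.cos q) + (w - z) * Real.cos q / ((z - 1) * (w - 1)) := by
  have hc := Real.neg_one_le_cos q
  set c := Real.cos q
  have h1 : 0 < z - 1 + c := dpos hz q
  have h2 : 0 < w - 1 + c := dpos (by linarith) q
  have h3 : (0:ℝ) < (z - 1) * (w - 1) := by nlinarith
  rw [div_add_div _ _ h2.ne' h3.ne', div_le_div_iff₀ h1 (by positivity)]
  nlinarith [mul_nonneg (mul_nonneg (sq_nonneg c) (sub_pos.mpr hzw).le)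
    (show (0:ℝ) ≤ (z - 1) + (w - 1) + c by linarith)]

lemma keyb0 {z w : ℝ} (hz : 2 < z) (hzw : z < w) :
    Real.cos 0 / (z - 1 + Real.cos 0) <
      Real.cos 0 / (w - 1 + Real.cos 0) + (w - z) * Real.cos 0 / ((z - 1) * (w - 1)) := by
  rw [Real.cos_zero]
  have h1 : (0:ℝ) < z - 1 + 1 := by linarith
  have h2 : (0:ℝ) < w - 1 + 1 := by linarith
  have h3 : (0:ℝ) < (z - 1) * (w - 1) := by nlinarith
  rw [div_add_div _ _ h2.ne' h3.ne', div_lt_div_iff₀ h1 (by positivity)]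
  nlinarith [mul_pos (sub_pos.mpr hzw) (show (0:ℝ) < (z - 1) + (w - 1) + 1 by linarith)]

/-- On `(2, +∞)` the functions `a, b, c` are positive and strictly decreasing:
for all real `z, w` with `2 < z < w` one has `a(z) > a(w) > 0`, `b(z) > b(w) > 0`
and `c(z) > c(w) > 0`. -/
theorem abc_pos_strictAnti (z w : ℝ) (hz : 2 < z) (hzw : z < w) :
    (aF w < aF z ∧ 0 < aF w) ∧ (bF w < bF z ∧ 0 < bF w) ∧ (cF w < cF z ∧ 0 < cF w) := by
  have hw : 2 < w := by linarith
  have hpi : -Real.pi < Real.pi := by linarith [Real.pi_pos]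
  have hK : (0:ℝ) < (2 * Real.pi)⁻¹ := by positivity
  -- a strictly decreasing
  have ha_mono : aF w < aF z := by
    unfold aF
    refine mul_lt_mul_of_pos_left ?_ hK
    refine integral_lt_integral_of_continuousOn_of_le_of_exists_lt hpi
      (contInv hw).continuousOn (contInv hz).continuousOn
      (fun q _ => inv_anti₀ (dpos hz q) (by linarith)) ?_
    exact ⟨0, ⟨by linarith, by linarith⟩, by
      apply inv_strictAnti₀ (dpos hz 0); linarith⟩
  -- a positive
  have ha_pos : 0 < aF w := by
    unfold aF
    refine mul_pos hK ?_
    exact intervalIntegral_pos_of_pos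
      ((contInv hw).intervalIntegrable _ _) (fun q => inv_pos.mpr (dpos hw q)) hpi
  -- c strictly decreasing
  have hc_mono : cF w < cF z := by
    unfold cF
    refine mul_lt_mul_of_pos_left ?_ hK
    refine integral_lt_integral_of_continuousOn_of_le_of_exists_lt hpi
      (contDiv hw (Real.continuous_cos.pow 2)).continuousOn (contDiv hz (Real.continuous_cos.pow 2)).continuousOn
      (fun q _ => by
        apply div_le_div_of_nonneg_left (sq_nonneg _) (dpos hz q)
        linarith) ?_
    refine ⟨0, ⟨by linarith, by linarith⟩, ?_⟩
    rw [Real.cos_zero, div_lt_div_iff₀ (by linarith) (by linarith)]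
    nlinarith
  -- c positive
  have hc_pos : 0 < cF w := by
    unfold cF
    refine mul_pos hK ?_
    have h0 : (0:ℝ) = ∫ _ in (-Real.pi)..Real.pi, (0:ℝ) := by simp
    rw [h0]
    refine integral_lt_integral_of_continuousOn_of_le_of_exists_lt hpi
      continuousOn_const (contDiv hw (Real.continuous_cos.pow 2)).continuousOn
      (fun q _ => div_nonneg (sq_nonneg _) (dpos hw q).le) ?_
    refine ⟨0, ⟨by linarith, by linarith⟩, ?_⟩
    rw [Real.cos_zero]
    have hww : (0:ℝ) < w - 1 + 1 := by linarith
    positivity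
  -- b positive : the integral is negative
  have hb_int_neg : (∫ q in (-Real.pi)..Real.pi, Real.cos q / (w - 1 + Real.cos q)) < 0 := by
    have h0 : (∫ q in (-Real.pi)..Real.pi, Real.cos q / (w - 1)) = 0 := by
      rw [intervalIntegral.integral_div, integral_cos]
      simp
    rw [← h0]
    refine integral_lt_integral_of_continuousOn_of_le_of_exists_lt hpi
      (contDiv hw Real.continuous_cos).continuousOn
      (Real.continuous_cos.div_const _).continuousOn
      (fun q _ => ?_) ?_
    · have h1 := dpos hw q
      have h2 : (0:ℝ) < w - 1 := by linarith
      rw [div_le_div_iff₀ h1 h2]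
      nlinarith [sq_nonneg (Real.cos q)]
    · refine ⟨0, ⟨by linarith, by linarith⟩, ?_⟩
      rw [Real.cos_zero, div_lt_div_iff₀ (by linarith) (by linarith : (0:ℝ) < w - 1)]
      nlinarith
  have hb_pos : 0 < bF w := by
    unfold bF
    have := mul_pos hK (neg_pos.mpr hb_int_neg)
    linarith [mul_neg_of_pos_of_neg hK hb_int_neg]
  -- b strictly decreasing
  have hb_mono : bF w < bF z := by
    have hlt : (∫ q in (-Real.pi)..Real.pi, Real.cos q / (z - 1 + Real.cos q)) <
        ∫ q in (-Real.pi)..Real.pi, Real.cos q / (w - 1 + Real.cos q) := by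
      have hgint : (∫ q in (-Real.pi)..Real.pi,
          (Real.cos q / (w - 1 + Real.cos q) + (w - z) * Real.cos q / ((z - 1) * (w - 1)))) =
          ∫ q in (-Real.pi)..Real.pi, Real.cos q / (w - 1 + Real.cos q) := by
        rw [integral_add (g := fun q => (w - z) * Real.cos q / ((z - 1) * (w - 1))) ((contDiv hw Real.continuous_cos).intervalIntegrable _ _)
          (((continuous_const.mul Real.continuous_cos).div_const _).intervalIntegrable _ _)]
        have : (∫ q in (-Real.pi)..Real.pi, (w - z) * Real.cos q / ((z - 1) * (w - 1))) = 0 := by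
          rw [intervalIntegral.integral_div, intervalIntegral.integral_const_mul,
            integral_cos]
          simp
        rw [this, add_zero]
      rw [← hgint]
      refine integral_lt_integral_of_continuousOn_of_le_of_exists_lt hpi
        (contDiv hz Real.continuous_cos).continuousOn
        ((contDiv hw Real.continuous_cos).add
          ((continuous_const.mul Real.continuous_cos).div_const _)).continuousOn
        (fun q _ => keyb hz hzw q) ?_
      exact ⟨0, ⟨by linarith, by linarith⟩, keyb0 hz hzw⟩
    unfold bF
    have := mul_lt_mul_of_pos_left hlt hK
    linarith
  exact ⟨⟨ha_mono, ha_pos⟩, ⟨hb_mono, hb_pos⟩, ⟨hc_mono, hc_pos⟩⟩
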